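/- Let d ≥ 2 and suppose the Korobov cubature formula P_m(·,a) is exact on T(L,d) for some natural number L ≥ 2. Then there exists a constant C_1(d) > 0 (depending only on d) such that the dispersion of the Korobov point set K_m(a) satisfies disp(K_m(a)) ≤ C_1(d) · L^{-1}. -/

import Mathlib

open MeasureTheory Real

noncomputable section

/-- The univariate smooth hat function `h^r_u`. -/
def hFun (u : ℝ) : ℕ → ℝ → ℝ
  | 0 => fun _ => 0
  | 1 => fun x => Set.indicator (Set.Ico (-(u / 2)) (u / 2)) (fun _ => (1 : ℝ)) x
  | (r + 2) => fun x => ∫ y : ℝ, hFun u (r + 1) (x - y) * hFun u 1 y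

/-- The multivariate function `h^r_B` for the box with center `z` and parameter vector `u`. -/
def hBox (d r : ℕ) (z u : Fin d → ℝ) (x : Fin d → ℝ) : ℝ :=
  ∏ j, hFun (u j) r (x j - z j)

/-- The box `B = ∏_j [z_j - r u_j/2, z_j + r u_j/2)`. -/
def boxSet (d r : ℕ) (z u : Fin d → ℝ) : Set (Fin d → ℝ) :=
  Set.univ.pi fun j => Set.Ico (z j - r * u j / 2) (z j + r * u j / 2)

/-- The unit cube `[0,1)^d`. -/
def unitCube (d : ℕ) : Set (Fin d → ℝ) :=
  Set.univ.pi fun _ => Set.Ico (0 : ℝ) 1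

/-- Periodization of a multivariate function over `ℤ^d`. -/
def periodize (d : ℕ) (f : (Fin d → ℝ) → ℝ) (x : Fin d → ℝ) : ℝ :=
  ∑' m : Fin d → ℤ, f fun j => (m j : ℝ) + x j

/-- The error of the equal-weight cubature with nodes `ξ 1, …, ξ m` applied to the
periodization of `h^r_B` shifted by `z`. -/
def errFun (d r m : ℕ) (ξ : ℕ → Fin d → ℝ) (zB u : Fin d → ℝ) (z : Fin d → ℝ) : ℝ :=
  (∫ x in unitCube d, periodize d (hBox d r zB u) fun j => x j - z j) -
    (m : ℝ)⁻¹ * ∑ μ ∈ Finset.Icc 1 m, periodize d (hBox d r zB u) fun j => ξ μ j - z j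

/-- The hyperbolic cross `Γ(N,d)`. -/
def hyperbolicCross (d : ℕ) (N : ℝ) : Set (Fin d → ℤ) :=
  {k | (∏ j, max |(k j : ℝ)| 1) ≤ N}

/-- The exponential `e^{2πi(k,x)}`. -/
def expFun (d : ℕ) (k : Fin d → ℤ) (x : Fin d → ℝ) : ℂ :=
  Complex.exp (2 * Real.pi * Complex.I * ∑ j, (k j : ℂ) * (x j : ℂ))

/-- The space `T(N,d)` of trigonometric polynomials with frequencies in `Γ(N,d)`. -/
def TSpace (d : ℕ) (N : ℝ) : Submodule ℂ ((Fin d → ℝ) → ℂ) :=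
  Submodule.span ℂ (expFun d '' hyperbolicCross d N)

/-- The nodes `y^μ` of the Korobov cubature formula `P_m(·,a)`. -/
def korobovNode (d m : ℕ) (a : Fin d → ℤ) (μ : ℕ) : Fin d → ℝ :=
  fun j => Int.fract ((μ : ℝ) * (a j : ℝ) / (m : ℝ))

/-- The Korobov cubature formula `P_m(f,a)`. -/
def korobovSum (d m : ℕ) (a : Fin d → ℤ) (f : (Fin d → ℝ) → ℂ) : ℂ :=
  (m : ℂ)⁻¹ * ∑ μ ∈ Finset.Icc 1 m, f (korobovNode d m a μ)

/-- Exactness of the Korobov cubature formula on `T(N,d)`. -/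
def IsExact (d m : ℕ) (a : Fin d → ℤ) (N : ℝ) : Prop :=
  ∀ f ∈ TSpace d N, korobovSum d m a f = ∫ x in unitCube d, f x

/-- The Fibonacci numbers with `b 0 = b 1 = 1`. -/
def fibb : ℕ → ℕ
  | 0 => 1
  | 1 => 1
  | (n + 2) => fibb (n + 1) + fibb n

/-- The points of the Fibonacci point set `𝓕_n`. -/
def fibNode (n : ℕ) (μ : ℕ) : Fin 2 → ℝ :=
  ![(μ : ℝ) / (fibb n : ℝ), Int.fract ((μ : ℝ) * (fibb (n - 1) : ℝ) / (fibb n : ℝ))]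


set_option maxHeartbeats 1000000

namespace KorobovAux
open Finset



/-- 1-D exponential -/
def E (k : ℤ) (t : ℝ) : ℂ := Complex.exp (2 * Real.pi * Complex.I * (k * t))

lemma E_mul (k l : ℤ) (t : ℝ) : E k t * E l t = E (k + l) t := by
  rw [E, E, E, ← Complex.exp_add]
  congr 1
  push_cast
  ring

lemma E_zero (t : ℝ) : E 0 t = 1 := by simp [E]

lemma continuous_E (k : ℤ) : Continuous (E k) := by
  unfold E; fun_prop

lemma prod_E (d : ℕ) (k : Fin d → ℤ) (x : Fin d → ℝ) :
    ∏ j, E (k j) (x j) = expFun d k x := by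
  rw [expFun, Finset.mul_sum, Complex.exp_sum]
  exact Finset.prod_congr rfl fun j _ => by rw [E]

lemma integral_E_Ico (k : ℤ) :
    ∫ t in Set.Ico (0:ℝ) 1, E k t = if k = 0 then 1 else 0 := by
  rcases eq_or_ne k 0 with rfl | hk
  · simp only [E_zero, if_true]
    rw [setIntegral_const]
    simp
  · simp only [hk, if_false]
    have h1 : (∫ t in Set.Ico (0:ℝ) 1, E k t) = ∫ t in (0:ℝ)..1, E k t := by
      rw [intervalIntegral.integral_of_le (by norm_num : (0:ℝ) ≤ 1),
        integral_Ico_eq_integral_Ioo, integral_Ioc_eq_integral_Ioo]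
    rw [h1]
    have hc : (2 * Real.pi * Complex.I * k) ≠ 0 := by
      simp [Real.pi_ne_zero, Complex.I_ne_zero, hk]
    have he : ∀ t : ℝ, E k t = Complex.exp ((2 * Real.pi * Complex.I * k) * t) := by
      intro t; rw [E]; ring_nf
    simp_rw [he]
    rw [integral_exp_mul_complex hc]
    have h2 : Complex.exp (2 * Real.pi * Complex.I * k * (1:ℝ)) = 1 := by
      push_cast
      rw [mul_one]
      rw [← Complex.exp_int_mul_two_pi_mul_I k]
      congr 1
      ring
    rw [h2]
    simp
lemma integral_expFun (d : ℕ) (k : Fin d → ℤ) :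
    ∫ x in unitCube d, expFun d k x = if k = 0 then 1 else 0 := by
  have hum : MeasurableSet (unitCube d) :=
    MeasurableSet.univ_pi fun _ => measurableSet_Ico
  rw [← integral_indicator hum]
  have hpt : ∀ x : Fin d → ℝ, (unitCube d).indicator (expFun d k) x
      = ∏ j, (Set.Ico (0:ℝ) 1).indicator (E (k j)) (x j) := by
    intro x
    by_cases hx : x ∈ unitCube d
    · rw [Set.indicator_of_mem hx, ← prod_E]
      refine Finset.prod_congr rfl fun j _ => ?_
      have : x j ∈ Set.Ico (0:ℝ) 1 := hx j (Set.mem_univ j)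
      rw [Set.indicator_of_mem this]
    · rw [Set.indicator_of_notMem hx]
      have : ∃ j, x j ∉ Set.Ico (0:ℝ) 1 := by
        by_contra hc
        push_neg at hc
        exact hx fun j _ => hc j
      obtain ⟨j, hj⟩ := this
      exact (Finset.prod_eq_zero (Finset.mem_univ j)
        (Set.indicator_of_notMem hj _)).symm
  simp_rw [hpt]
  rw [MeasureTheory.volume_pi, MeasureTheory.integral_fintype_prod_eq_prod
    (f := fun j t => (Set.Ico (0:ℝ) 1).indicator (E (k j)) t)]
  have h1 : ∀ j, (∫ t : ℝ, (Set.Ico (0:ℝ) 1).indicator (E (k j)) t)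
      = if k j = 0 then (1:ℂ) else 0 := by
    intro j
    rw [integral_indicator measurableSet_Ico]
    exact integral_E_Ico (k j)
  simp_rw [h1]
  rw [Finset.prod_boole]
  by_cases hk : k = 0
  · simp [hk]
  · have : ¬ (∀ j, k j = 0) := fun h => hk (funext h)
    simp [hk, this]
/-! ### 1D polynomial machinery -/

def bb (θ : ℝ) (i : ℤ) : ℝ := Real.sin ((i + 1) * θ)

def Sn (n : ℕ) : Finset (ℤ × ℤ × ℤ) :=
  ({-1, 0, 1} : Finset ℤ) ×ˢ (Finset.Icc (0:ℤ) n ×ˢ Finset.Icc (0:ℤ) n)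

def fr (z : ℤ × ℤ × ℤ) : ℤ := z.1 + z.2.1 - z.2.2

def γc (θ c A B : ℝ) (z : ℤ × ℤ × ℤ) : ℂ :=
  (if z.1 = 0 then (B : ℂ) else ((A/2 : ℝ) : ℂ)) * (bb θ z.2.1 : ℝ) * (bb θ z.2.2 : ℝ)
    * Complex.exp (-(2 * Real.pi * Complex.I * (fr z * c)))

def uu (n : ℕ) (θ c : ℝ) (t : ℝ) : ℂ :=
  ∑ i ∈ Finset.Icc (0:ℤ) n, (bb θ i : ℂ) * E i (t - c)

def Qr (n : ℕ) (θ c : ℝ) (t : ℝ) : ℝ := Complex.normSq (uu n θ c t)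

def PP (n : ℕ) (θ c A B : ℝ) (t : ℝ) : ℝ :=
  (A * Real.cos (2 * Real.pi * (t - c)) + B) * Qr n θ c t

lemma E_conj (k : ℤ) (s : ℝ) : (starRingEnd ℂ) (E k s) = E (-k) s := by
  rw [E, E, ← Complex.exp_conj]
  congr 1
  simp only [map_mul, Complex.conj_I, map_ofNat, Complex.conj_ofReal, map_intCast]
  push_cast
  ring

lemma E_shift (k : ℤ) (t c : ℝ) :
    E k (t - c) = E k t * Complex.exp (-(2 * Real.pi * Complex.I * (k * c))) := by
  rw [E, E, ← Complex.exp_add]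
  congr 1
  push_cast
  ring

lemma E_one_add (τ : ℝ) : E 1 τ + E (-1) τ = 2 * Real.cos (2 * Real.pi * τ) := by
  have h1 : E 1 τ = Complex.exp ((2 * Real.pi * τ : ℝ) * Complex.I) := by
    rw [E]; congr 1; push_cast; ring
  have h2 : E (-1) τ = Complex.exp ((-(2 * Real.pi * τ) : ℝ) * Complex.I) := by
    rw [E]; congr 1; push_cast; ring
  rw [h1, h2, Complex.exp_mul_I, Complex.exp_mul_I]
  push_cast
  rw [Complex.cos_neg, Complex.sin_neg]
  ring

lemma cos_rep (c A B t : ℝ) :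
    ((A * Real.cos (2 * Real.pi * (t - c)) + B : ℝ) : ℂ)
      = ∑ s ∈ ({-1, 0, 1} : Finset ℤ),
          (if s = 0 then (B : ℂ) else ((A/2 : ℝ) : ℂ)) * E s (t - c) := by
  have : ({-1, 0, 1} : Finset ℤ) = insert (-1) (insert 0 {1}) := rfl
  rw [this, Finset.sum_insert (by decide), Finset.sum_insert (by decide),
    Finset.sum_singleton]
  simp only [if_true, if_neg (by decide : (-1:ℤ) ≠ 0), if_neg (by decide : (1:ℤ) ≠ 0)]
  rw [E_zero, mul_one]
  have h := E_one_add (t - c)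
  push_cast at h ⊢
  linear_combination (-(A : ℂ)/2) * h
lemma P_rep (n : ℕ) (θ c A B : ℝ) (t : ℝ) :
    ((PP n θ c A B t : ℝ) : ℂ) = ∑ z ∈ Sn n, γc θ c A B z * E (fr z) t := by
  have hQ : ((Qr n θ c t : ℝ) : ℂ) = uu n θ c t * (starRingEnd ℂ) (uu n θ c t) :=
    (Complex.mul_conj _).symm
  have hconj : (starRingEnd ℂ) (uu n θ c t)
      = ∑ q ∈ Finset.Icc (0:ℤ) n, ((bb θ q : ℝ) : ℂ) * E (-q) (t - c) := by
    rw [uu, map_sum]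
    exact Finset.sum_congr rfl fun q _ => by rw [map_mul, Complex.conj_ofReal, E_conj]
  rw [PP, Complex.ofReal_mul, hQ, hconj, cos_rep, uu]
  rw [Finset.sum_mul_sum, Finset.sum_mul_sum]
  rw [Sn, Finset.sum_product]
  refine Finset.sum_congr rfl fun s _ => ?_
  rw [Finset.sum_product]
  refine Finset.sum_congr rfl fun p _ => ?_
  rw [Finset.mul_sum]
  refine Finset.sum_congr rfl fun q _ => ?_
  have h1 : E s (t - c) * (E p (t - c) * E (-q) (t - c)) = E (s + p - q) (t - c) := by
    rw [E_mul, E_mul]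
    congr 1
    ring
  have h2 : E (s + p - q) (t - c)
      = E (s + p - q) t * Complex.exp (-(2 * Real.pi * Complex.I * ((s + p - q : ℤ) * c))) :=
    E_shift _ _ _
  calc (if s = 0 then (B:ℂ) else ((A/2:ℝ):ℂ)) * E s (t - c)
        * (((bb θ p : ℝ):ℂ) * E p (t - c) * (((bb θ q : ℝ):ℂ) * E (-q) (t - c)))
      = (if s = 0 then (B:ℂ) else ((A/2:ℝ):ℂ)) * ((bb θ p : ℝ):ℂ) * ((bb θ q : ℝ):ℂ)
        * (E s (t - c) * (E p (t - c) * E (-q) (t - c))) := by ring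
    _ = γc θ c A B (s, p, q) * E (fr (s, p, q)) t := by
        rw [h1, h2, γc]
        simp only [fr]
        ring
/-- reindexing: `∑_{i∈Icc 1 N} f i = ∑_{i ∈ Icc 0 (N-1)} f (i+1)` -/
lemma sum_shift (N : ℤ) (f : ℤ → ℝ) :
    ∑ i ∈ Finset.Icc (1:ℤ) N, f i = ∑ i ∈ Finset.Icc (0:ℤ) (N - 1), f (i + 1) := by
  have : Finset.Icc (1:ℤ) N = (Finset.Icc (0:ℤ) (N-1)).map (addRightEmbedding 1) := by
    rw [Finset.map_add_right_Icc]
    norm_num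
  rw [this, Finset.sum_map]
  rfl

lemma sum_shiftC (N : ℤ) (f : ℤ → ℂ) :
    ∑ i ∈ Finset.Icc (1:ℤ) N, f i = ∑ i ∈ Finset.Icc (0:ℤ) (N - 1), f (i + 1) := by
  have : Finset.Icc (1:ℤ) N = (Finset.Icc (0:ℤ) (N-1)).map (addRightEmbedding 1) := by
    rw [Finset.map_add_right_Icc]
    norm_num
  rw [this, Finset.sum_map]
  rfl

/-- the eigenvector identity for the discrete Laplacian on a path -/
lemma eigen (n : ℕ) (θ : ℝ) (hθ : ((n:ℝ) + 2) * θ = Real.pi) :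
    ∑ i ∈ Finset.Icc (0:ℤ) ((n:ℤ) - 1), bb θ i * bb θ (i + 1)
      = Real.cos θ * ∑ i ∈ Finset.Icc (0:ℤ) (n:ℤ), (bb θ i)^2 := by
  set g : ℤ → ℝ := fun i => bb θ (i - 1) * bb θ i with hg
  have step : ∀ i : ℤ, 2 * Real.cos θ * (bb θ i)^2 = g (i + 1) + g i := by
    intro i
    have h1 : Real.sin ((i+1)*θ + θ) + Real.sin ((i+1)*θ - θ)
        = 2 * Real.sin ((i+1)*θ) * Real.cos θ := by
      rw [Real.sin_add, Real.sin_sub]; ring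
    have e1 : bb θ (i + 1) = Real.sin ((i+1)*θ + θ) := by
      rw [bb]; congr 1; push_cast; ring
    have e2 : bb θ (i - 1) = Real.sin ((i+1)*θ - θ) := by
      rw [bb]; congr 1; push_cast; ring
    have e0 : bb θ i = Real.sin ((i+1)*θ) := by rw [bb]
    have e3 : i + 1 - 1 = i := by ring
    simp only [hg, e3, e0, e1, e2]
    linear_combination (-Real.sin ((i+1)*θ)) * h1
  have key : 2 * Real.cos θ * ∑ i ∈ Finset.Icc (0:ℤ) (n:ℤ), (bb θ i)^2
      = ∑ i ∈ Finset.Icc (0:ℤ) (n:ℤ), (g (i+1) + g i) := by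
    rw [Finset.mul_sum]
    exact Finset.sum_congr rfl fun i _ => step i
  have hb0 : g 0 = 0 := by simp [hg, bb]
  have hbtop : g ((n:ℤ) + 1) = 0 := by
    have hz : bb θ ((n:ℤ) + 1) = 0 := by
      rw [bb]
      have harg : (((n:ℤ):ℝ) + 1 + 1) * θ = Real.pi := by push_cast; push_cast at hθ; linarith
      rw [show ((((n:ℤ) + 1 : ℤ) : ℝ) + 1) * θ = (((n:ℤ):ℝ) + 1 + 1) * θ by push_cast; ring]
      rw [harg, Real.sin_pi]
    simp [hg, hz]
  have split1 : Finset.Icc (0:ℤ) (n:ℤ) = insert 0 (Finset.Icc (1:ℤ) (n:ℤ)) := by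
    ext i; simp only [Finset.mem_Icc, Finset.mem_insert]; omega
  have split2 : Finset.Icc (1:ℤ) ((n:ℤ)+1) = insert ((n:ℤ)+1) (Finset.Icc (1:ℤ) (n:ℤ)) := by
    ext i; simp only [Finset.mem_Icc, Finset.mem_insert]; omega
  have h01 : (0:ℤ) ∉ Finset.Icc (1:ℤ) (n:ℤ) := by simp
  have h02 : ((n:ℤ)+1) ∉ Finset.Icc (1:ℤ) (n:ℤ) := by simp
  have hsum1 : ∑ i ∈ Finset.Icc (0:ℤ) (n:ℤ), g (i+1)
      = ∑ i ∈ Finset.Icc (1:ℤ) (n:ℤ), g i := by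
    have h := (sum_shift ((n:ℤ)+1) g).symm
    norm_num at h
    rw [h, split2, Finset.sum_insert h02, hbtop, zero_add]
  have hsum2 : ∑ i ∈ Finset.Icc (0:ℤ) (n:ℤ), g i
      = ∑ i ∈ Finset.Icc (1:ℤ) (n:ℤ), g i := by
    rw [split1, Finset.sum_insert h01, hb0, zero_add]
  have hT : ∑ i ∈ Finset.Icc (0:ℤ) ((n:ℤ) - 1), bb θ i * bb θ (i + 1)
      = ∑ i ∈ Finset.Icc (1:ℤ) (n:ℤ), g i := by
    rw [sum_shift (n:ℤ) g]
    refine Finset.sum_congr rfl fun i _ => ?_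
    simp only [hg, add_sub_cancel_right]
  rw [Finset.sum_add_distrib, hsum1, hsum2] at key
  rw [hT]
  linarith
lemma inner_eval (n : ℕ) (θ c A B : ℝ) (s : ℤ) :
    (∑ p ∈ Finset.Icc (0:ℤ) (n:ℤ), ∑ q ∈ Finset.Icc (0:ℤ) (n:ℤ),
      γc θ c A B (s, p, q) * (if fr (s, p, q) = 0 then (1:ℂ) else 0))
      = ∑ p ∈ Finset.Icc (0:ℤ) (n:ℤ), (if s + p ∈ Finset.Icc (0:ℤ) (n:ℤ) then
          (if s = 0 then (B:ℂ) else ((A/2:ℝ):ℂ)) * ((bb θ p : ℝ):ℂ) * ((bb θ (s+p) : ℝ):ℂ)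
          else 0) := by
  refine Finset.sum_congr rfl fun p _ => ?_
  have hterm : ∀ q : ℤ, γc θ c A B (s, p, q) * (if fr (s, p, q) = 0 then (1:ℂ) else 0)
      = if q = s + p then
          (if s = 0 then (B:ℂ) else ((A/2:ℝ):ℂ)) * ((bb θ p : ℝ):ℂ) * ((bb θ q : ℝ):ℂ)
        else 0 := by
    intro q
    by_cases hq : q = s + p
    · subst hq
      have hfr : fr (s, p, s + p) = 0 := by simp only [fr]; omega
      rw [if_pos rfl, if_pos hfr, γc, hfr]
      simp
    · have hfr : fr (s, p, q) ≠ 0 := by simp only [fr]; omega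
      rw [if_neg hq, if_neg hfr, mul_zero]
  simp_rw [hterm]
  rw [Finset.sum_ite_eq' (Finset.Icc (0:ℤ) (n:ℤ)) (s + p)]

lemma zero_coeff (n : ℕ) (θ c A B : ℝ) :
    ∑ z ∈ Sn n, γc θ c A B z * (if fr z = 0 then (1:ℂ) else 0)
      = ((A * (∑ i ∈ Finset.Icc (0:ℤ) ((n:ℤ) - 1), bb θ i * bb θ (i+1))
          + B * (∑ i ∈ Finset.Icc (0:ℤ) (n:ℤ), (bb θ i)^2) : ℝ) : ℂ) := by
  rw [Sn, Finset.sum_product]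
  have hins : ({-1, 0, 1} : Finset ℤ) = insert (-1) (insert 0 {1}) := rfl
  rw [hins, Finset.sum_insert (by decide), Finset.sum_insert (by decide),
    Finset.sum_singleton]
  simp_rw [Finset.sum_product]
  rw [inner_eval, inner_eval, inner_eval]
  -- s = 0 term
  have h0 : (∑ p ∈ Finset.Icc (0:ℤ) (n:ℤ), (if (0:ℤ) + p ∈ Finset.Icc (0:ℤ) (n:ℤ) then
        (if (0:ℤ) = 0 then (B:ℂ) else ((A/2:ℝ):ℂ)) * ((bb θ p : ℝ):ℂ) * ((bb θ ((0:ℤ)+p) : ℝ):ℂ)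
        else 0))
      = ((B * ∑ i ∈ Finset.Icc (0:ℤ) (n:ℤ), (bb θ i)^2 : ℝ) : ℂ) := by
    push_cast
    rw [Finset.mul_sum]
    refine Finset.sum_congr rfl fun p hp => ?_
    rw [zero_add, if_pos hp]
    ring
  -- s = 1 term
  have h1 : (∑ p ∈ Finset.Icc (0:ℤ) (n:ℤ), (if (1:ℤ) + p ∈ Finset.Icc (0:ℤ) (n:ℤ) then
        (if (1:ℤ) = 0 then (B:ℂ) else ((A/2:ℝ):ℂ)) * ((bb θ p : ℝ):ℂ) * ((bb θ ((1:ℤ)+p) : ℝ):ℂ)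
        else 0))
      = ((A/2 * ∑ i ∈ Finset.Icc (0:ℤ) ((n:ℤ)-1), bb θ i * bb θ (i+1) : ℝ) : ℂ) := by
    rw [← Finset.sum_filter]
    have hfil : (Finset.Icc (0:ℤ) (n:ℤ)).filter (fun p => (1:ℤ) + p ∈ Finset.Icc (0:ℤ) (n:ℤ))
        = Finset.Icc (0:ℤ) ((n:ℤ)-1) := by
      ext i
      simp only [Finset.mem_filter, Finset.mem_Icc]
      omega
    rw [hfil]
    push_cast
    rw [Finset.mul_sum]
    refine Finset.sum_congr rfl fun p hp => ?_
    rw [show (1:ℤ) + p = p + 1 by ring]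
    ring
  -- s = -1 term
  have hm1 : (∑ p ∈ Finset.Icc (0:ℤ) (n:ℤ), (if (-1:ℤ) + p ∈ Finset.Icc (0:ℤ) (n:ℤ) then
        (if (-1:ℤ) = 0 then (B:ℂ) else ((A/2:ℝ):ℂ)) * ((bb θ p : ℝ):ℂ) * ((bb θ ((-1:ℤ)+p) : ℝ):ℂ)
        else 0))
      = ((A/2 * ∑ i ∈ Finset.Icc (0:ℤ) ((n:ℤ)-1), bb θ i * bb θ (i+1) : ℝ) : ℂ) := by
    rw [← Finset.sum_filter]
    have hfil : (Finset.Icc (0:ℤ) (n:ℤ)).filter (fun p => (-1:ℤ) + p ∈ Finset.Icc (0:ℤ) (n:ℤ))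
        = Finset.Icc (1:ℤ) (n:ℤ) := by
      ext i
      simp only [Finset.mem_filter, Finset.mem_Icc]
      omega
    rw [hfil, sum_shiftC (n:ℤ)]
    push_cast
    rw [Finset.mul_sum]
    refine Finset.sum_congr rfl fun p hp => ?_
    rw [show (-1:ℤ) + (p + 1) = p by ring]
    ring
  rw [h0, h1, hm1]
  push_cast
  ring
/-! ### d-dimensional machinery -/

def Wc (d : ℕ) (n : Fin d → ℕ) (θ c A B : Fin d → ℝ) : (Fin d → ℝ) → ℂ :=
  fun x => ∏ j, ((PP (n j) (θ j) (c j) (A j) (B j) (x j) : ℝ) : ℂ)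

lemma W_expand (d : ℕ) (n : Fin d → ℕ) (θ c A B : Fin d → ℝ) (x : Fin d → ℝ) :
    Wc d n θ c A B x
      = ∑ g ∈ Fintype.piFinset (fun j => Sn (n j)),
          (∏ j, γc (θ j) (c j) (A j) (B j) (g j)) * expFun d (fun j => fr (g j)) x := by
  rw [Wc]
  have : ∀ j : Fin d, ((PP (n j) (θ j) (c j) (A j) (B j) (x j) : ℝ) : ℂ)
      = ∑ z ∈ Sn (n j), γc (θ j) (c j) (A j) (B j) z * E (fr z) (x j) := fun j => P_rep _ _ _ _ _ _
  simp_rw [this]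
  rw [Finset.prod_univ_sum]
  refine Finset.sum_congr rfl fun g _ => ?_
  rw [Finset.prod_mul_distrib, prod_E]

lemma continuous_expFun (d : ℕ) (k : Fin d → ℤ) : Continuous (expFun d k) := by
  unfold expFun
  fun_prop

lemma integrableOn_expFun (d : ℕ) (k : Fin d → ℤ) :
    IntegrableOn (expFun d k) (unitCube d) := by
  have hsub : unitCube d ⊆ Set.univ.pi (fun _ : Fin d => Set.Icc (0:ℝ) 1) := by
    intro x hx j _
    exact Set.Ico_subset_Icc_self (hx j (Set.mem_univ j))
  have hcpt : IsCompact (Set.univ.pi (fun _ : Fin d => Set.Icc (0:ℝ) 1)) :=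
    isCompact_univ_pi fun _ => isCompact_Icc
  exact ((continuous_expFun d k).continuousOn.integrableOn_compact hcpt).mono_set hsub

lemma W_integral (d : ℕ) (n : Fin d → ℕ) (θ c A B : Fin d → ℝ) :
    ∫ x in unitCube d, Wc d n θ c A B x
      = ((∏ j, (A j * (∑ i ∈ Finset.Icc (0:ℤ) ((n j : ℤ) - 1), bb (θ j) i * bb (θ j) (i+1))
          + B j * (∑ i ∈ Finset.Icc (0:ℤ) (n j : ℤ), (bb (θ j) i)^2)) : ℝ) : ℂ) := by
  simp_rw [W_expand]
  rw [integral_finset_sum _ (fun g _ => ((integrableOn_expFun d _).const_mul _))]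
  have hterm : ∀ g ∈ Fintype.piFinset (fun j => Sn (n j)),
      (∫ x in unitCube d, (∏ j, γc (θ j) (c j) (A j) (B j) (g j))
          * expFun d (fun j => fr (g j)) x)
      = ∏ j, (γc (θ j) (c j) (A j) (B j) (g j) * (if fr (g j) = 0 then (1:ℂ) else 0)) := by
    intro g _
    rw [MeasureTheory.integral_const_mul, integral_expFun]
    have : (if (fun j => fr (g j)) = (0 : Fin d → ℤ) then (1:ℂ) else 0)
        = ∏ j, (if fr (g j) = 0 then (1:ℂ) else 0) := by
      rw [Fintype.prod_boole]
      congr 1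
      simp [funext_iff]
    rw [this, ← Finset.prod_mul_distrib]
  rw [Finset.sum_congr rfl hterm,
    ← Finset.prod_univ_sum (fun j => Sn (n j))
      (fun j z => γc (θ j) (c j) (A j) (B j) z * (if fr z = 0 then (1:ℂ) else 0))]
  rw [Complex.ofReal_prod]
  exact Finset.prod_congr rfl fun j _ => zero_coeff _ _ _ _ _
lemma W_mem (d : ℕ) (n : Fin d → ℕ) (θ c A B : Fin d → ℝ) (N : ℝ)
    (hbound : (∏ j, ((n j : ℝ) + 1)) ≤ N) :
    Wc d n θ c A B ∈ TSpace d N := by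
  have hfun : Wc d n θ c A B = ∑ g ∈ Fintype.piFinset (fun j => Sn (n j)),
      (∏ j, γc (θ j) (c j) (A j) (B j) (g j)) • expFun d (fun j => fr (g j)) := by
    funext x
    rw [W_expand]
    simp only [Finset.sum_apply, Pi.smul_apply, smul_eq_mul]
  rw [hfun]
  refine Submodule.sum_mem _ fun g hg => Submodule.smul_mem _ _ (Submodule.subset_span ?_)
  refine ⟨fun j => fr (g j), ?_, rfl⟩
  have hg' := Fintype.mem_piFinset.mp hg
  have hj : ∀ j, max |((fr (g j) : ℤ) : ℝ)| 1 ≤ (n j : ℝ) + 1 := by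
    intro j
    have hz := hg' j
    rw [Sn, Finset.mem_product] at hz
    obtain ⟨hs, hpq⟩ := hz
    rw [Finset.mem_product] at hpq
    obtain ⟨hp, hq⟩ := hpq
    rw [Finset.mem_Icc] at hp hq
    have hs' : (g j).1 = -1 ∨ (g j).1 = 0 ∨ (g j).1 = 1 := by
      simpa using hs
    have habs : |fr (g j)| ≤ (n j : ℤ) + 1 := by
      rw [abs_le]; unfold fr; omega
    refine max_le ?_ ?_
    · rw [← Int.cast_abs]
      exact_mod_cast habs
    · have : (0:ℝ) ≤ (n j : ℝ) := Nat.cast_nonneg _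
      linarith
  show (∏ j, max |((fr (g j) : ℤ) : ℝ)| 1) ≤ N
  calc (∏ j, max |((fr (g j) : ℤ) : ℝ)| 1) ≤ ∏ j, ((n j : ℝ) + 1) :=
        Finset.prod_le_prod (fun j _ => le_trans zero_le_one (le_max_right _ _))
          (fun j _ => hj j)
    _ ≤ N := hbound

/-- the 1D sign lemma -/
lemma cos_bound {x y p : ℝ} (hx0 : 0 ≤ x) (hxy : x < y) (hy1 : y ≤ 1)
    (hp0 : 0 ≤ p) (hp1 : p < 1) (hp : p ∉ Set.Ico x y) :
    Real.cos (2 * Real.pi * (p - (x+y)/2)) ≤ Real.cos (Real.pi * (y - x)) := by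
  have hpi := Real.pi_pos
  set h := y - x with hh
  set u := p - (x+y)/2 with hu
  have hbounds : h/2 ≤ |u| ∧ |u| ≤ 1 - h/2 := by
    rw [Set.mem_Ico, not_and_or, not_le, not_lt] at hp
    rcases hp with hlt | hge
    · constructor
      · rw [abs_of_nonpos (by simp only [hu]; linarith)]
        simp only [hu, hh]; linarith
      · rw [abs_of_nonpos (by simp only [hu]; linarith)]
        simp only [hu, hh]; linarith
    · constructor
      · rw [abs_of_nonneg (by simp only [hu]; linarith)]
        simp only [hu, hh]; linarith
      · rw [abs_of_nonneg (by simp only [hu]; linarith)]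
        simp only [hu, hh]; linarith
  obtain ⟨hb1, hb2⟩ := hbounds
  have h0 : 0 < h := by simp only [hh]; linarith
  have h1 : h ≤ 1 := by simp only [hh]; linarith
  have hcabs : Real.cos (2 * Real.pi * u) = Real.cos (2 * Real.pi * |u|) := by
    rcases abs_cases u with ⟨he, _⟩ | ⟨he, _⟩
    · rw [he]
    · rw [he, mul_neg, Real.cos_neg]
  rw [hcabs]
  by_cases hcase : 2 * Real.pi * |u| ≤ Real.pi
  · exact Real.cos_le_cos_of_nonneg_of_le_pi (by positivity) hcase (by nlinarith)
  · push_neg at hcase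
    have : Real.cos (2 * Real.pi * |u|) = Real.cos (2 * Real.pi - 2 * Real.pi * |u|) := by
      rw [Real.cos_two_pi_sub]
    rw [this]
    refine Real.cos_le_cos_of_nonneg_of_le_pi (by positivity) (by nlinarith) (by nlinarith)

/-- `1 - cos t ≤ t^2/2` for `t ∈ [0, π]` -/
lemma one_sub_cos_le {t : ℝ} (ht0 : 0 ≤ t) (htpi : t ≤ Real.pi) :
    1 - Real.cos t ≤ t^2 / 2 := by
  have hid : Real.cos (t/2) ^ 2 = 1/2 + Real.cos t / 2 := by
    have := Real.cos_sq (t/2)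
    rwa [show 2 * (t/2) = t by ring] at this
  have hsc := Real.sin_sq_add_cos_sq (t/2)
  have hs : Real.sin (t/2) ≤ t/2 := Real.sin_le (by linarith)
  have hs0 : 0 ≤ Real.sin (t/2) :=
    Real.sin_nonneg_of_nonneg_of_le_pi (by linarith) (by linarith)
  nlinarith [sq_nonneg (Real.sin (t/2))]

/-- `2h² ≤ 1 - cos (π h)` for `h ∈ [0,1]` -/
lemma two_sq_le_one_sub_cos {h : ℝ} (h0 : 0 ≤ h) (h1 : h ≤ 1) :
    2 * h^2 ≤ 1 - Real.cos (Real.pi * h) := by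
  have hpi := Real.pi_pos
  have hid : Real.cos ((Real.pi * h)/2) ^ 2 = 1/2 + Real.cos (Real.pi * h) / 2 := by
    have := Real.cos_sq ((Real.pi * h)/2)
    rwa [show 2 * ((Real.pi * h)/2) = Real.pi * h by ring] at this
  have hsc := Real.sin_sq_add_cos_sq ((Real.pi * h)/2)
  have hJ : h ≤ Real.sin ((Real.pi * h)/2) := by
    have := Real.mul_le_sin (x := (Real.pi * h)/2) (by positivity)
      (by nlinarith)
    calc h = 2 / Real.pi * ((Real.pi * h)/2) := by field_simp
      _ ≤ Real.sin ((Real.pi * h)/2) := this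
  nlinarith

lemma S_pos (n : ℕ) (θ : ℝ) (hθ0 : 0 < θ) (hθπ : θ < Real.pi) :
    0 < ∑ i ∈ Finset.Icc (0:ℤ) (n:ℤ), (bb θ i)^2 := by
  refine Finset.sum_pos' (fun i _ => sq_nonneg _) ⟨0, ?_, ?_⟩
  · rw [Finset.mem_Icc]
    exact ⟨le_refl _, Int.ofNat_nonneg n⟩
  · have : bb θ 0 = Real.sin θ := by rw [bb]; norm_num
    rw [this]
    have := Real.sin_pos_of_pos_of_lt_pi hθ0 hθπ
    positivity
lemma W_eq_sum (d : ℕ) (n : Fin d → ℕ) (θ c A B : Fin d → ℝ) :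
    Wc d n θ c A B = ∑ g ∈ Fintype.piFinset (fun j => Sn (n j)),
      (∏ j, γc (θ j) (c j) (A j) (B j) (g j)) • expFun d (fun j => fr (g j)) := by
  funext x
  rw [W_expand]
  simp only [Finset.sum_apply, Pi.smul_apply, smul_eq_mul]

lemma W_integrableOn (d : ℕ) (n : Fin d → ℕ) (θ c A B : Fin d → ℝ) :
    IntegrableOn (Wc d n θ c A B) (unitCube d) := by
  rw [W_eq_sum]
  have heq : (∑ g ∈ Fintype.piFinset (fun j => Sn (n j)),
      (∏ j, γc (θ j) (c j) (A j) (B j) (g j)) • expFun d (fun j => fr (g j)))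
      = fun x => ∑ g ∈ Fintype.piFinset (fun j => Sn (n j)),
        (∏ j, γc (θ j) (c j) (A j) (B j) (g j)) * expFun d (fun j => fr (g j)) x := by
    funext x
    simp only [Finset.sum_apply, Pi.smul_apply, smul_eq_mul]
  rw [heq]
  exact integrable_finset_sum _ fun g _ => ((integrableOn_expFun d _).const_mul _)

/-- pointwise real form of `Wc` -/
lemma Wc_real (d : ℕ) (n : Fin d → ℕ) (θ c A B : Fin d → ℝ) (x : Fin d → ℝ) :
    Wc d n θ c A B x = ((∏ j, PP (n j) (θ j) (c j) (A j) (B j) (x j) : ℝ) : ℂ) := by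
  rw [Wc, Complex.ofReal_prod]
/-- abstract nonpositivity of the minorant combination at a point outside the box -/
lemma sum_ite_prod_le (d : ℕ) (hd : 0 < d) (mr Mr : Fin d → ℝ) (js : Fin d)
    (hM0 : ∀ i, 0 ≤ Mr i) (hmM : ∀ i, mr i ≤ Mr i) (hjs : mr js ≤ 0) :
    (∑ j₀, ∏ i, (if i = j₀ then mr i else Mr i)) - ((d:ℝ) - 1) * ∏ i, Mr i ≤ 0 := by
  have htj : ∀ j₀ : Fin d, (∏ i, (if i = j₀ then mr i else Mr i)) ≤ ∏ i, Mr i := by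
    intro j₀
    by_cases hneg : mr j₀ ≤ 0
    · have ht0 : (∏ i, (if i = j₀ then mr i else Mr i)) ≤ 0 := by
        rw [← Finset.mul_prod_erase Finset.univ _ (Finset.mem_univ j₀), if_pos rfl]
        have hrest : 0 ≤ ∏ i ∈ Finset.univ.erase j₀, (if i = j₀ then mr i else Mr i) :=
          Finset.prod_nonneg fun i hi => by
            rw [if_neg (Finset.ne_of_mem_erase hi)]; exact hM0 i
        exact mul_nonpos_of_nonpos_of_nonneg hneg hrest
      exact le_trans ht0 (Finset.prod_nonneg fun i _ => hM0 i)
    · push_neg at hneg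
      refine Finset.prod_le_prod (fun i _ => ?_) (fun i _ => ?_)
      · by_cases hij : i = j₀
        · rw [if_pos hij, hij]; exact hneg.le
        · rw [if_neg hij]; exact hM0 i
      · by_cases hij : i = j₀
        · rw [if_pos hij, hij]; exact hmM j₀
        · rw [if_neg hij]
  have hts : (∏ i, (if i = js then mr i else Mr i)) ≤ 0 := by
    rw [← Finset.mul_prod_erase Finset.univ _ (Finset.mem_univ js), if_pos rfl]
    have hrest : 0 ≤ ∏ i ∈ Finset.univ.erase js, (if i = js then mr i else Mr i) :=
      Finset.prod_nonneg fun i hi => by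
        rw [if_neg (Finset.ne_of_mem_erase hi)]; exact hM0 i
    exact mul_nonpos_of_nonpos_of_nonneg hjs hrest
  have hsplit : (∑ j₀, ∏ i, (if i = j₀ then mr i else Mr i))
      = (∏ i, (if i = js then mr i else Mr i))
        + ∑ j₀ ∈ Finset.univ.erase js, ∏ i, (if i = j₀ then mr i else Mr i) :=
    (Finset.add_sum_erase Finset.univ _ (Finset.mem_univ js)).symm
  have hsum2 : (∑ j₀ ∈ Finset.univ.erase js, ∏ i, (if i = j₀ then mr i else Mr i))
      ≤ ((d:ℝ) - 1) * ∏ i, Mr i := by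
    have hle := Finset.sum_le_sum (fun j₀ (_ : j₀ ∈ Finset.univ.erase js) => htj j₀)
    rw [Finset.sum_const, Finset.card_erase_of_mem (Finset.mem_univ js),
      Finset.card_univ, Fintype.card_fin, nsmul_eq_mul] at hle
    have hcast : ((d - 1 : ℕ) : ℝ) = (d:ℝ) - 1 := by
      have h1 : (1:ℕ) ≤ d := hd
      push_cast [Nat.cast_sub h1]
      ring
    rw [hcast] at hle
    exact hle
  rw [hsplit]
  linarith

/-- abstract positivity of the mean of the minorant combination -/
lemma sum_ite_prod_pos (d : ℕ) (hd : 2 ≤ d) (zm zM : Fin d → ℝ)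
    (hzM : ∀ i, 0 < zM i) (hkey : ∀ i, (1 - 1/(d:ℝ)) * zM i < zm i) :
    0 < (∑ j₀, ∏ i, (if i = j₀ then zm i else zM i)) - ((d:ℝ) - 1) * ∏ i, zM i := by
  have hd0 : 0 < d := by omega
  haveI : Nonempty (Fin d) := ⟨⟨0, hd0⟩⟩
  have hprodzM : 0 < ∏ i, zM i := Finset.prod_pos fun i _ => hzM i
  have hIvalgt : ∀ j₀ : Fin d,
      (1 - 1/(d:ℝ)) * ∏ i, zM i < ∏ i, (if i = j₀ then zm i else zM i) := by
    intro j₀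
    have herase1 : (∏ i, (if i = j₀ then zm i else zM i))
        = zm j₀ * ∏ i ∈ Finset.univ.erase j₀, zM i := by
      rw [← Finset.mul_prod_erase Finset.univ _ (Finset.mem_univ j₀), if_pos rfl]
      congr 1
      refine Finset.prod_congr rfl fun i hi => ?_
      rw [if_neg (Finset.ne_of_mem_erase hi)]
    have herase2 : (∏ i, zM i) = zM j₀ * ∏ i ∈ Finset.univ.erase j₀, zM i :=
      (Finset.mul_prod_erase Finset.univ _ (Finset.mem_univ j₀)).symm
    have hpe : 0 < ∏ i ∈ Finset.univ.erase j₀, zM i :=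
      Finset.prod_pos fun i _ => hzM i
    rw [herase1, herase2]
    have := hkey j₀
    nlinarith
  have hsum : (d:ℝ) * ((1 - 1/(d:ℝ)) * ∏ i, zM i)
      < ∑ j₀, ∏ i, (if i = j₀ then zm i else zM i) := by
    have hlt := Finset.sum_lt_sum_of_nonempty (Finset.univ_nonempty (α := Fin d))
      (fun j₀ _ => hIvalgt j₀)
    rw [Finset.sum_const, Finset.card_univ, Fintype.card_fin, nsmul_eq_mul] at hlt
    exact hlt
  have hdne : (d:ℝ) ≠ 0 := by positivity
  have heq : (d:ℝ) * ((1 - 1/(d:ℝ)) * ∏ i, zM i) = ((d:ℝ) - 1) * ∏ i, zM i := by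
    field_simp
  linarith
end KorobovAux

open KorobovAux

/-- Theorem FT.2: the dispersion of a Korobov point set whose cubature formula is exact on
`T(L,d)` is at most `C₁(d)/L`: every axis-parallel box inside `[0,1)^d` avoiding all
Korobov nodes has volume at most `C₁(d)/L`. -/
theorem korobov_dispersion (d : ℕ) (hd : 2 ≤ d) :
    ∃ C₁ : ℝ, 0 < C₁ ∧
      ∀ m : ℕ, 0 < m → ∀ a : Fin d → ℤ, ∀ L : ℕ, 2 ≤ L → IsExact d m a L →
        ∀ x y : Fin d → ℝ, (∀ j, 0 ≤ x j) → (∀ j, x j < y j) → (∀ j, y j ≤ 1) →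
          (∀ μ ∈ Finset.Icc 1 m, ∃ j, korobovNode d m a μ j ∉ Set.Ico (x j) (y j)) →
          ∏ j, (y j - x j) ≤ C₁ / L := by
  have hd0 : 0 < d := by omega
  haveI : Nonempty (Fin d) := ⟨⟨0, hd0⟩⟩
  refine ⟨(6*(d:ℝ))^d, by positivity, ?_⟩
  intro m hm a L hL hex x y hx0 hxy hy1 hnode
  by_contra hcon
  push_neg at hcon
  set h : Fin d → ℝ := fun j => y j - x j with hhdef
  have hh0 : ∀ j, 0 < h j := fun j => sub_pos.mpr (hxy j)
  have hh1 : ∀ j, h j ≤ 1 := fun j => by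
    have h1 := hx0 j; have h2 := hy1 j
    simp only [hhdef]; linarith
  have hv0 : 0 < ∏ j, h j := Finset.prod_pos fun j _ => hh0 j
  set cc : Fin d → ℝ := fun j => (x j + y j)/2 with hccdef
  set n : Fin d → ℕ := fun j => ⌈Real.pi * Real.sqrt d / h j⌉₊ with hndef
  set θ : Fin d → ℝ := fun j => Real.pi / ((n j : ℝ) + 2) with hθdef
  have hpi := Real.pi_pos
  have hd1R : (1:ℝ) ≤ (d:ℝ) := by exact_mod_cast hd0
  have hsd1 : (1:ℝ) ≤ Real.sqrt d := by
    rw [show (1:ℝ) = Real.sqrt 1 by rw [Real.sqrt_one]]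
    exact Real.sqrt_le_sqrt hd1R
  have hsq : Real.sqrt d ^ 2 = (d:ℝ) := Real.sq_sqrt (by positivity)
  have hsdd : Real.sqrt d ≤ (d:ℝ) := by nlinarith [hsd1, hsq]
  have hθeq : ∀ j, ((n j : ℝ) + 2) * θ j = Real.pi := by
    intro j
    have hne : ((n j : ℝ) + 2) ≠ 0 := by positivity
    simp only [hθdef]
    field_simp
  have hθ0 : ∀ j, 0 < θ j := fun j => by simp only [hθdef]; positivity
  have hθπ : ∀ j, θ j < Real.pi := fun j => by
    simp only [hθdef]
    apply div_lt_self hpi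
    have : (0:ℝ) ≤ (n j:ℝ) := Nat.cast_nonneg _
    linarith
  have hceil_lb : ∀ j, Real.pi * Real.sqrt d / h j ≤ (n j : ℝ) := fun j => Nat.le_ceil _
  have hceil_ub : ∀ j, (n j : ℝ) < Real.pi * Real.sqrt d / h j + 1 := fun j =>
    Nat.ceil_lt_add_one (le_of_lt (by have hhj := hh0 j; positivity))
  have hd0R : (0:ℝ) < (d:ℝ) := by positivity
  have hstrict : ∀ j, (d:ℝ) * (1 - Real.cos (θ j)) < 1 - Real.cos (Real.pi * h j) := by
    intro j
    have h1 : Real.pi * Real.sqrt d / h j < (n j : ℝ) + 2 := by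
      have := hceil_lb j; linarith
    have hθh : θ j < h j / Real.sqrt d := by
      simp only [hθdef]
      rw [div_lt_div_iff₀ (by positivity) (by positivity)]
      rw [div_lt_iff₀ (hh0 j)] at h1
      nlinarith
    have h2 : 1 - Real.cos (θ j) ≤ (θ j)^2/2 := one_sub_cos_le (hθ0 j).le (hθπ j).le
    have h3 : (θ j)^2 * (d:ℝ) < (h j)^2 := by
      have ht0 := hθ0 j
      have hs0 : (0:ℝ) < Real.sqrt d := by linarith
      rw [lt_div_iff₀ hs0] at hθh
      have hpos : 0 < θ j * Real.sqrt d := mul_pos ht0 hs0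
      have hsqlt : (θ j * Real.sqrt d)^2 < (h j)^2 := by nlinarith
      calc (θ j)^2 * (d:ℝ) = (θ j * Real.sqrt d)^2 := by rw [mul_pow, hsq]
        _ < (h j)^2 := hsqlt
    have h4 : 2 * (h j)^2 ≤ 1 - Real.cos (Real.pi * h j) :=
      two_sq_le_one_sub_cos (hh0 j).le (hh1 j)
    have hhj := hh0 j
    nlinarith [mul_le_mul_of_nonneg_left h2 hd0R.le, h3, h4, mul_pos hhj hhj]
  set S : Fin d → ℝ := fun j => ∑ i ∈ Finset.Icc (0:ℤ) ((n j):ℤ), (bb (θ j) i)^2 with hSdef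
  have hSpos : ∀ j, 0 < S j := fun j => S_pos (n j) (θ j) (hθ0 j) (hθπ j)
  set zM : Fin d → ℝ := fun j => (1 - Real.cos (Real.pi * h j)) * S j with hzMdef
  set zm : Fin d → ℝ := fun j => (Real.cos (θ j) - Real.cos (Real.pi * h j)) * S j with hzmdef
  have hzMpos : ∀ j, 0 < zM j := by
    intro j
    have h4 := two_sq_le_one_sub_cos (hh0 j).le (hh1 j)
    have h5 := hh0 j; have h6 := hSpos j
    simp only [hzMdef]
    have hc1 : 0 < 1 - Real.cos (Real.pi * h j) := by nlinarith
    exact mul_pos hc1 h6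
  have hkey : ∀ j, (1 - 1/(d:ℝ)) * zM j < zm j := by
    intro j
    have hs := hstrict j
    have h6 := hSpos j
    simp only [hzMdef, hzmdef]
    have hfd : (1 - Real.cos (θ j)) < (1/(d:ℝ)) * (1 - Real.cos (Real.pi * h j)) := by
      rw [div_mul_eq_mul_div, lt_div_iff₀ hd0R]
      nlinarith
    nlinarith
  -- flavor coefficient vectors
  set Av : Fin d → Fin d → ℝ := fun j₀ i => if i = j₀ then 1 else 0 with hAvdef
  set Bv : Fin d → Fin d → ℝ := fun j₀ i =>
    if i = j₀ then -Real.cos (Real.pi * h i) else 1 - Real.cos (Real.pi * h i) with hBvdef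
  set A0 : Fin d → ℝ := fun _ => 0 with hA0def
  set B0 : Fin d → ℝ := fun i => 1 - Real.cos (Real.pi * h i) with hB0def
  set F : (Fin d → ℝ) → ℂ :=
    (∑ j₀, Wc d n θ cc (Av j₀) (Bv j₀)) - ((d:ℂ) - 1) • Wc d n θ cc A0 B0 with hFdef
  -- frequency bound
  have hLpos : (0:ℝ) < (L:ℝ) := by
    have : 0 < L := by omega
    exact_mod_cast this
  have hfreq : (∏ j, ((n j:ℝ) + 1)) ≤ (L:ℝ) := by
    have hstep1 : ∀ j, (n j:ℝ) + 1 ≤ 6 * Real.sqrt d / h j := by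
      intro j
      have hub := hceil_ub j
      have hhj := hh0 j
      have hhh := hh1 j
      have hπ4 : Real.pi ≤ 4 := by linarith [Real.pi_le_four]
      have h2 : Real.pi * Real.sqrt d / h j + 2 ≤ 6 * Real.sqrt d / h j := by
        rw [div_add' _ _ _ (ne_of_gt hhj), div_le_div_iff₀ hhj hhj]
        have hstep : Real.pi * Real.sqrt d + 2 * h j ≤ 6 * Real.sqrt d := by
          nlinarith [hπ4, hsd1, hhh, hhj]
        exact mul_le_mul_of_nonneg_right hstep hhj.le
      linarith
    have hprod : (∏ j, ((n j:ℝ) + 1)) ≤ ∏ j, 6 * Real.sqrt d / h j :=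
      Finset.prod_le_prod (fun j _ => by positivity) (fun j _ => hstep1 j)
    have hprod2 : (∏ j, 6 * Real.sqrt d / h j) = (6 * Real.sqrt d)^d / ∏ j, h j := by
      rw [Finset.prod_div_distrib, Finset.prod_const, Finset.card_univ, Fintype.card_fin]
    have hC : (6 * Real.sqrt d)^d ≤ (6 * (d:ℝ))^d :=
      pow_le_pow_left₀ (by positivity) (by nlinarith) d
    have hfin : (6 * (d:ℝ))^d / ∏ j, h j < (L:ℝ) := by
      rw [div_lt_iff₀ hv0]
      rw [div_lt_iff₀ hLpos] at hcon
      nlinarith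
    have hmid : (6 * Real.sqrt d)^d / ∏ j, h j ≤ (6 * (d:ℝ))^d / ∏ j, h j :=
      (div_le_div_iff_of_pos_right hv0).mpr hC
    calc (∏ j, ((n j:ℝ)+1)) ≤ (6*Real.sqrt d)^d / ∏ j, h j := hprod2 ▸ hprod
      _ ≤ (6*(d:ℝ))^d / ∏ j, h j := hmid
      _ ≤ (L:ℝ) := hfin.le
  -- membership in TSpace
  have hmem : F ∈ TSpace d L := by
    rw [hFdef]
    exact Submodule.sub_mem _
      (Submodule.sum_mem _ fun j₀ _ => W_mem d n θ cc (Av j₀) (Bv j₀) L hfreq)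
      (Submodule.smul_mem _ _ (W_mem d n θ cc A0 B0 L hfreq))
  have hexact := hex F hmem
  -- integral of F
  have hintW : ∀ j₀ : Fin d,
      (∫ xx in unitCube d, Wc d n θ cc (Av j₀) (Bv j₀) xx)
        = (((∏ i, (if i = j₀ then zm i else zM i) : ℝ)) : ℂ) := by
    intro j₀
    rw [W_integral]
    congr 1
    refine Finset.prod_congr rfl fun i _ => ?_
    rw [eigen (n i) (θ i) (hθeq i)]
    by_cases hij : i = j₀
    · simp only [hij, if_pos, hAvdef, hBvdef, hzmdef, hSdef, if_true, eq_self_iff_true]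
      ring
    · simp only [hij, hAvdef, hBvdef, hzMdef, hSdef, if_false, if_neg]
      ring
  have hint0 : (∫ xx in unitCube d, Wc d n θ cc A0 B0 xx) = (((∏ i, zM i : ℝ)) : ℂ) := by
    rw [W_integral]
    congr 1
    refine Finset.prod_congr rfl fun i _ => ?_
    rw [eigen (n i) (θ i) (hθeq i)]
    simp only [hA0def, hB0def, hzMdef, hSdef]
    ring
  have hintF : (∫ xx in unitCube d, F xx)
      = ((((∑ j₀, ∏ i, (if i = j₀ then zm i else zM i))
          - ((d:ℝ) - 1) * ∏ i, zM i : ℝ)) : ℂ) := by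
    have hFx : ∀ xx : Fin d → ℝ, F xx = (∑ j₀, Wc d n θ cc (Av j₀) (Bv j₀) xx)
        - ((d:ℂ)-1) * Wc d n θ cc A0 B0 xx := by
      intro xx
      rw [hFdef]
      simp only [Pi.sub_apply, Finset.sum_apply, Pi.smul_apply, smul_eq_mul]
    simp_rw [hFx]
    rw [integral_sub (integrable_finset_sum _ fun j₀ _ => W_integrableOn d n θ cc _ _)
      ((W_integrableOn d n θ cc A0 B0).const_mul _)]
    rw [integral_finset_sum _ fun j₀ _ => W_integrableOn d n θ cc _ _]
    rw [MeasureTheory.integral_const_mul]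
    rw [hint0, Finset.sum_congr rfl fun j₀ _ => hintW j₀]
    push_cast
    ring
  -- positivity of the integral
  have hRpos : 0 < (∑ j₀, ∏ i, (if i = j₀ then zm i else zM i))
      - ((d:ℝ) - 1) * ∏ i, zM i :=
    sum_ite_prod_pos d hd zm zM hzMpos hkey
  -- nonpositivity of the cubature values
  have hQpos : ∀ (nn : ℕ) (th co t : ℝ), 0 ≤ Qr nn th co t := fun nn th co t =>
    Complex.normSq_nonneg _
  have hFreal : ∀ p : Fin d → ℝ, F p = ((((∑ j₀, ∏ i,
      (if i = j₀ then PP (n i) (θ i) (cc i) 1 (-Real.cos (Real.pi * h i)) (p i)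
        else PP (n i) (θ i) (cc i) 0 (1 - Real.cos (Real.pi * h i)) (p i)))
      - ((d:ℝ) - 1) * ∏ i, PP (n i) (θ i) (cc i) 0 (1 - Real.cos (Real.pi * h i)) (p i)
      : ℝ)) : ℂ) := by
    intro p
    rw [hFdef]
    simp only [Pi.sub_apply, Finset.sum_apply, Pi.smul_apply, smul_eq_mul]
    have hW0 : Wc d n θ cc A0 B0 p
        = ((∏ i, PP (n i) (θ i) (cc i) 0 (1 - Real.cos (Real.pi * h i)) (p i) : ℝ) : ℂ) := by
      rw [Wc_real]
    have hWj : ∀ j₀ : Fin d, Wc d n θ cc (Av j₀) (Bv j₀) p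
        = ((((∏ i, (if i = j₀ then PP (n i) (θ i) (cc i) 1 (-Real.cos (Real.pi * h i)) (p i)
          else PP (n i) (θ i) (cc i) 0 (1 - Real.cos (Real.pi * h i)) (p i))) : ℝ)) : ℂ) := by
      intro j₀
      rw [Wc_real]
      congr 1
      refine Finset.prod_congr rfl fun i _ => ?_
      by_cases hij : i = j₀
      · simp only [hij, hAvdef, hBvdef, if_pos, if_true, eq_self_iff_true]
      · simp only [hij, hAvdef, hBvdef, if_neg, if_false]
    rw [hW0, Finset.sum_congr rfl fun j₀ _ => hWj j₀]
    push_cast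
    ring
  have hGle : ∀ μ ∈ Finset.Icc 1 m,
      ((∑ j₀, ∏ i, (if i = j₀ then
          PP (n i) (θ i) (cc i) 1 (-Real.cos (Real.pi * h i)) (korobovNode d m a μ i)
        else PP (n i) (θ i) (cc i) 0 (1 - Real.cos (Real.pi * h i)) (korobovNode d m a μ i)))
      - ((d:ℝ) - 1) * ∏ i, PP (n i) (θ i) (cc i) 0 (1 - Real.cos (Real.pi * h i))
          (korobovNode d m a μ i)) ≤ 0 := by
    intro μ hμ
    obtain ⟨js, hjs⟩ := hnode μ hμ
    refine sum_ite_prod_le d hd0 _ _ js (fun i => ?_) (fun i => ?_) ?_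
    · rw [PP]
      have h1 : Real.cos (Real.pi * h i) ≤ 1 := Real.cos_le_one _
      have h2 := hQpos (n i) (θ i) (cc i) (korobovNode d m a μ i)
      nlinarith
    · rw [PP, PP]
      have h1 : Real.cos (2 * Real.pi * (korobovNode d m a μ i - cc i)) ≤ 1 :=
        Real.cos_le_one _
      have h2 := hQpos (n i) (θ i) (cc i) (korobovNode d m a μ i)
      nlinarith
    · rw [PP]
      have hp0 : 0 ≤ korobovNode d m a μ js := Int.fract_nonneg _
      have hp1 : korobovNode d m a μ js < 1 := Int.fract_lt_one _
      have hcb := cos_bound (hx0 js) (hxy js) (hy1 js) hp0 hp1 hjs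
      have h2 := hQpos (n js) (θ js) (cc js) (korobovNode d m a μ js)
      have hccjs : cc js = (x js + y js)/2 := by simp only [hccdef]
      have hhjs : h js = y js - x js := by simp only [hhdef]
      rw [hccjs, hhjs]
      nlinarith
  -- cubature sum is a nonpositive real
  have hksum : korobovSum d m a F
      = ((((m:ℝ)⁻¹ * ∑ μ ∈ Finset.Icc 1 m, ((∑ j₀, ∏ i, (if i = j₀ then
          PP (n i) (θ i) (cc i) 1 (-Real.cos (Real.pi * h i)) (korobovNode d m a μ i)
        else PP (n i) (θ i) (cc i) 0 (1 - Real.cos (Real.pi * h i)) (korobovNode d m a μ i)))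
      - ((d:ℝ) - 1) * ∏ i, PP (n i) (θ i) (cc i) 0 (1 - Real.cos (Real.pi * h i))
          (korobovNode d m a μ i)) : ℝ)) : ℂ) := by
    rw [korobovSum, Finset.sum_congr rfl fun μ _ => hFreal (korobovNode d m a μ)]
    push_cast
    ring
  have hle0 : ((m:ℝ)⁻¹ * ∑ μ ∈ Finset.Icc 1 m, ((∑ j₀, ∏ i, (if i = j₀ then
          PP (n i) (θ i) (cc i) 1 (-Real.cos (Real.pi * h i)) (korobovNode d m a μ i)
        else PP (n i) (θ i) (cc i) 0 (1 - Real.cos (Real.pi * h i)) (korobovNode d m a μ i)))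
      - ((d:ℝ) - 1) * ∏ i, PP (n i) (θ i) (cc i) 0 (1 - Real.cos (Real.pi * h i))
          (korobovNode d m a μ i))) ≤ 0 := by
    have hsn := Finset.sum_nonpos hGle
    have hminv : (0:ℝ) ≤ (m:ℝ)⁻¹ := by positivity
    exact mul_nonpos_of_nonneg_of_nonpos hminv hsn
  rw [hksum, hintF] at hexact
  have hre := Complex.ofReal_inj.mp hexact
  linarith

end
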